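/- Let $\trianglelefteq$ be a partial order on a Coxeter group $W$ satisfying properties (PO1), (PO2), (PO3) as above. Let $s \in S$ be a simple reflection and $t$ a reflection with $s \ne t$, and suppose $w \in W$ satisfies $w \triangleleft\!\!\cdot\, ws$ and $w \triangleleft\!\!\cdot\, wt$ (covering relations). Then $ws \triangleleft\!\!\cdot\, wts$ and $wt \triangleleft\!\!\cdot\, wts$. -/

import Mathlib

/-!
STATEMENT 4 (Lemma 7.10 of the paper): for a partial order `⊴` on a Coxeter group
satisfying (PO1), (PO2), (PO3), if `w ⋖ ws` and `w ⋖ wt` (`s` simple, `t` a reflection,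
`s ≠ t`), then `ws ⋖ wts` and `wt ⋖ wts`.
-/

variable {B W : Type*} [Group W] {M : CoxeterMatrix B}

/-- `u` is covered by `v` in the order `le`: `u ⊲ v` and `[u,v] = {u,v}`. -/
def covBy (le : W → W → Prop) (u v : W) : Prop :=
  (le u v ∧ u ≠ v) ∧ ∀ z, le u z → le z v → z = u ∨ z = v

/-- **Length-two intervals** (Lemma 7.10 of the paper). -/
theorem stmt4 (cs : CoxeterSystem M W)
    (le : W → W → Prop)
    (hrefl : ∀ w, le w w)
    (htrans : ∀ u v w, le u v → le v w → le u w)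
    (hantisymm : ∀ u v, le u v → le v u → u = v)
    -- (PO1): `w` and `tw` are comparable for every reflection `t`, and these
    -- relations generate the partial order
    (PO1 : ∀ (w t : W), cs.IsReflection t → le w (t * w) ∨ le (t * w) w)
    (PO1gen : ∀ a b, le a b →
      Relation.ReflTransGen (fun x y => le x y ∧ ∃ t, cs.IsReflection t ∧ y = t * x) a b)
    -- (PO2): if `w ⊲ ws` then the interval `[w, ws]` is `{w, ws}`
    (PO2 : ∀ (w : W) (i : B), (le w (w * cs.simple i) ∧ w ≠ w * cs.simple i) →
      ∀ z, le w z → le z (w * cs.simple i) → z = w ∨ z = w * cs.simple i)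
    -- (PO3i): if `x ⊲ xs` and `y ⊴ xs` then `ys ⊴ xs`
    (PO3i : ∀ (x y : W) (i : B), (le x (x * cs.simple i) ∧ x ≠ x * cs.simple i) →
      le y (x * cs.simple i) → le (y * cs.simple i) (x * cs.simple i))
    -- (PO3ii): if `xs ⊲ x` and `xs ⊴ y` then `xs ⊴ ys`
    (PO3ii : ∀ (x y : W) (i : B), (le (x * cs.simple i) x ∧ x * cs.simple i ≠ x) →
      le (x * cs.simple i) y → le (x * cs.simple i) (y * cs.simple i))
    (i : B) (t : W) (ht : cs.IsReflection t) (hst : cs.simple i ≠ t)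
    (w : W)
    (hws : covBy le w (w * cs.simple i))
    (hwt : covBy le w (w * t)) :
    covBy le (w * cs.simple i) (w * t * cs.simple i) ∧
      covBy le (w * t) (w * t * cs.simple i) := by
  obtain ⟨⟨hwws, hwne⟩, hIws⟩ := hws
  obtain ⟨⟨hwwt, hwtne⟩, hIwt⟩ := hwt
  have refl_ne_one : ∀ u : W, cs.IsReflection u → u ≠ 1 := by
    intro u hu h
    have := hu.odd_length
    rw [h, cs.length_one] at this
    simp at this
  have hs1 : cs.simple i ≠ 1 := refl_ne_one _ (cs.isReflection_simple i)
  have ht1 : t ≠ 1 := refl_ne_one _ ht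
  have mulss : ∀ a : W, a * cs.simple i * cs.simple i = a := fun a => by
    rw [mul_assoc, cs.simple_mul_simple_self, mul_one]
  have hne_ts : w * t ≠ w * t * cs.simple i := fun h =>
    hs1 (left_eq_mul.mp h)
  have hne_s_ts : w * cs.simple i ≠ w * t * cs.simple i := fun h =>
    ht1 (left_eq_mul.mp (mul_right_cancel h))
  have hwt_ne_w : w * t ≠ w := fun h =>
    ht1 (mul_eq_left.mp h)
  have hws_ne_wt : w * cs.simple i ≠ w * t := fun h => hst (mul_left_cancel h)
  -- Step A : le (w*t) (w*t*s)
  have leA : le (w * t) (w * t * cs.simple i) := by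
    rcases PO1 (w * t) ((w * t) * cs.simple i * (w * t)⁻¹)
        ((cs.isReflection_simple i).conj (w * t)) with h | h
    · rw [show (w * t) * cs.simple i * (w * t)⁻¹ * (w * t) = w * t * cs.simple i by group] at h
      exact h
    · exfalso
      rw [show (w * t) * cs.simple i * (w * t)⁻¹ * (w * t) = w * t * cs.simple i by group] at h
      have key : le (w * cs.simple i) (w * t) := by
        have h3 := PO3i (w * t * cs.simple i) w i
          (by rw [mulss]; exact ⟨h, hne_ts.symm⟩) (by rw [mulss]; exact hwwt)
        rwa [mulss] at h3
      rcases hIwt (w * cs.simple i) hwws key with h' | h'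
      · exact hwne h'.symm
      · exact hws_ne_wt h'
  -- Step B : le (w*s) (w*t*s)
  have leB : le (w * cs.simple i) (w * t * cs.simple i) := by
    rcases PO1 (w * cs.simple i) (w * t * w⁻¹) (ht.conj w) with h | h
    · rw [show w * t * w⁻¹ * (w * cs.simple i) = w * t * cs.simple i by group] at h
      exact h
    · exfalso
      rw [show w * t * w⁻¹ * (w * cs.simple i) = w * t * cs.simple i by group] at h
      have key : le (w * t) (w * cs.simple i) := by
        have h3 := PO3i w (w * t * cs.simple i) i ⟨hwws, hwne⟩ h
        rwa [mulss] at h3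
      rcases hIws (w * t) hwwt key with h' | h'
      · exact hwt_ne_w h'
      · exact hws_ne_wt h'.symm
  refine ⟨⟨⟨leB, hne_s_ts⟩, ?_⟩, ⟨⟨leA, hne_ts⟩, PO2 (w * t) i ⟨leA, hne_ts⟩⟩⟩
  -- interval [w*s, w*t*s]
  intro z hz1 hz2
  have hzs_ne : z ≠ z * cs.simple i := fun h =>
    hs1 (left_eq_mul.mp h)
  rcases PO1 z (z * cs.simple i * z⁻¹) ((cs.isReflection_simple i).conj z) with h | h
  · -- case z ⊴ zs : contradiction
    exfalso
    rw [show z * cs.simple i * z⁻¹ * z = z * cs.simple i by group] at h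
    have key : le z (w * t) := by
      have h3 := PO3ii (z * cs.simple i) (w * t * cs.simple i) i
        (by rw [mulss]; exact ⟨h, hzs_ne⟩) (by rw [mulss]; exact hz2)
      rwa [mulss, mulss] at h3
    rcases hIwt z (htrans _ _ _ hwws hz1) key with h' | h'
    · exact hwne (hantisymm _ _ (h' ▸ hz1) hwws).symm
    · subst h'
      rcases hIwt (w * cs.simple i) hwws hz1 with h'' | h''
      · exact hwne h''.symm
      · exact hws_ne_wt h''
  · -- case zs ⊴ z
    rw [show z * cs.simple i * z⁻¹ * z = z * cs.simple i by group] at h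
    have key1 : le (z * cs.simple i) (w * t) := by
      have h3 := PO3ii z (w * t * cs.simple i) i ⟨h, hzs_ne.symm⟩
        (htrans _ _ _ h hz2)
      rwa [mulss] at h3
    have key2 : le w (z * cs.simple i) := by
      have h3 := PO3ii (w * cs.simple i) z i
        (by rw [mulss]; exact ⟨hwws, hwne⟩) (by rw [mulss]; exact htrans _ _ _ hwws hz1)
      rwa [mulss] at h3
    rcases hIwt (z * cs.simple i) key2 key1 with h' | h'
    · left
      have : z * cs.simple i * cs.simple i = w * cs.simple i := by rw [h']
      rwa [mulss] at this
    · right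
      have : z * cs.simple i * cs.simple i = w * t * cs.simple i := by rw [h']
      rwa [mulss] at this
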